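/- Laufer's algorithm terminates on a negative-definite lattice: let ⟨·,·⟩ be a negative-definite symmetric bilinear form on ℤ^N with basis E_1,…,E_N. Then there is no infinite sequence z₀, z₁, z₂, … with z_{i+1} = z_i + E_{v(i)} where ⟨z_i, E_{v(i)}⟩ > 0 at every step. -/

import Mathlib

open Matrix Filter Topology

lemma laufer_symm_dot {R : Type*} [CommRing R] {n : ℕ} {A : Matrix (Fin n) (Fin n) R}
    (h : A.IsSymm) (x y : Fin n → R) : x ⬝ᵥ A.mulVec y = y ⬝ᵥ A.mulVec x := by
  rw [Matrix.dotProduct_mulVec, ← Matrix.mulVec_transpose, h.eq, dotProduct_comm]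

lemma laufer_expand {R : Type*} [CommRing R] {n : ℕ} {A : Matrix (Fin n) (Fin n) R}
    (h : A.IsSymm) (x y : Fin n → R) :
    (x + y) ⬝ᵥ A.mulVec (x + y) = x ⬝ᵥ A.mulVec x + 2 * (x ⬝ᵥ A.mulVec y) + y ⬝ᵥ A.mulVec y := by
  rw [mulVec_add, add_dotProduct, dotProduct_add, dotProduct_add,
    laufer_symm_dot h y x]
  ring

lemma laufer_cast {n : ℕ} (A : Matrix (Fin n) (Fin n) ℤ) (x y : Fin n → ℤ) :
    ((x ⬝ᵥ A.mulVec y : ℤ) : ℝ)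
      = (fun i => (x i : ℝ)) ⬝ᵥ (A.map ((↑) : ℤ → ℝ)).mulVec (fun i => (y i : ℝ)) := by
  have h := RingHom.map_dotProduct (Int.castRingHom ℝ) x (A.mulVec y)
  simp only [Int.coe_castRingHom] at h
  rw [h]
  congr 1
  funext i
  have h2 := RingHom.map_mulVec (Int.castRingHom ℝ) A y i
  simp at h2; exact h2

lemma laufer_cont {n : ℕ} (A : Matrix (Fin n) (Fin n) ℝ) :
    Continuous (fun x : Fin n → ℝ => x ⬝ᵥ A.mulVec x) := by
  simp only [dotProduct, mulVec]
  fun_prop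

lemma laufer_semidef {N : ℕ} (M : Matrix (Fin N) (Fin N) ℤ)
    (hneg : ∀ x : Fin N → ℤ, x ≠ 0 → x ⬝ᵥ M.mulVec x < 0)
    (x : Fin N → ℝ) :
    x ⬝ᵥ (M.map ((↑) : ℤ → ℝ)).mulVec x ≤ 0 := by
  set Mr := M.map ((↑) : ℤ → ℝ) with hMr
  set y : ℕ → Fin N → ℤ := fun k i => ⌊((k : ℝ) + 1) * x i⌋ with hy
  set u : ℕ → Fin N → ℝ := fun k => ((k : ℝ) + 1)⁻¹ • (fun i => ((y k i : ℝ))) with hu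
  have hk0 : ∀ k : ℕ, (0 : ℝ) < (k : ℝ) + 1 := fun k => by positivity
  have hcoord : ∀ i, Tendsto (fun k : ℕ => u k i) atTop (𝓝 (x i)) := by
    intro i
    rw [tendsto_iff_dist_tendsto_zero]
    apply squeeze_zero (fun k => dist_nonneg) (g := fun k : ℕ => ((k : ℝ) + 1)⁻¹)
    · intro k
      have hk := hk0 k
      have h1 : u k i = (y k i : ℝ) / ((k : ℝ) + 1) := by
        simp [hu, div_eq_inv_mul]
      rw [Real.dist_eq, h1]
      have h2 : (y k i : ℝ) / ((k : ℝ) + 1) - x i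
          = ((y k i : ℝ) - ((k : ℝ) + 1) * x i) / ((k : ℝ) + 1) := by
        field_simp
      rw [h2, abs_div, abs_of_pos hk, div_le_iff₀ hk, inv_mul_cancel₀ hk.ne']
      have h3 : (y k i : ℝ) ≤ ((k : ℝ) + 1) * x i := Int.floor_le _
      have h4 : ((k : ℝ) + 1) * x i - 1 < (y k i : ℝ) := Int.sub_one_lt_floor _
      rw [abs_le]
      constructor <;> nlinarith
    · exact tendsto_one_div_add_atTop_nhds_zero_nat.congr (fun k => by
        rw [one_div])
  have hlim : Tendsto u atTop (𝓝 x) := tendsto_pi_nhds.mpr hcoord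
  have hflim : Tendsto (fun k => u k ⬝ᵥ Mr.mulVec (u k)) atTop (𝓝 (x ⬝ᵥ Mr.mulVec x)) :=
    ((laufer_cont Mr).tendsto x).comp hlim
  refine le_of_tendsto hflim (Filter.Eventually.of_forall fun k => ?_)
  have hsc : u k ⬝ᵥ Mr.mulVec (u k)
      = (((k : ℝ) + 1)⁻¹) ^ 2 * ((fun i => ((y k i : ℝ))) ⬝ᵥ Mr.mulVec (fun i => ((y k i : ℝ)))) := by
    rw [hu]
    rw [mulVec_smul, smul_dotProduct, dotProduct_smul, smul_eq_mul, smul_eq_mul]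
    ring
  rw [hsc, ← laufer_cast]
  have hz : (y k ⬝ᵥ M.mulVec (y k) : ℤ) ≤ 0 := by
    by_cases h : y k = 0
    · simp [h]
    · exact le_of_lt (hneg _ h)
  have : ((y k ⬝ᵥ M.mulVec (y k) : ℤ) : ℝ) ≤ 0 := by exact_mod_cast hz
  nlinarith [sq_nonneg (((k : ℝ) + 1)⁻¹)]

lemma laufer_def {N : ℕ} (M : Matrix (Fin N) (Fin N) ℤ) (hsym : M.IsSymm)
    (hneg : ∀ x : Fin N → ℤ, x ≠ 0 → x ⬝ᵥ M.mulVec x < 0)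
    (x : Fin N → ℝ) (hx : x ≠ 0) :
    x ⬝ᵥ (M.map ((↑) : ℤ → ℝ)).mulVec x < 0 := by
  set Mr := M.map ((↑) : ℤ → ℝ) with hMr
  have hsymr : Mr.IsSymm := hsym.map _
  rcases lt_or_eq_of_le (laufer_semidef M hneg x) with h | h
  · exact h
  exfalso
  -- kernel argument
  have hker : ∀ y : Fin N → ℝ, x ⬝ᵥ Mr.mulVec y = 0 := by
    intro y
    set g := x ⬝ᵥ Mr.mulVec y with hg
    set b := y ⬝ᵥ Mr.mulVec y with hb
    have hbn : b ≤ 0 := laufer_semidef M hneg y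
    have key : ∀ t : ℝ, 2 * t * g + t ^ 2 * b ≤ 0 := by
      intro t
      have h2 : (t • y) ⬝ᵥ Mr.mulVec (t • y) = t ^ 2 * b := by
        rw [mulVec_smul, smul_dotProduct, dotProduct_smul, smul_eq_mul, smul_eq_mul]
        ring
      have h1 := laufer_semidef M hneg (x + t • y)
      rw [laufer_expand hsymr, h2] at h1
      rw [mulVec_smul, dotProduct_smul, smul_eq_mul] at h1
      rw [← hMr] at h
      rw [h] at h1
      linarith
    have hg2 : g ^ 2 ≤ 0 := by
      rcases eq_or_lt_of_le hbn with hb0 | hblt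
      · have := key g
        rw [← hb0] at this
        nlinarith
      · have h4 := key (-g / b)
        have hbne : b ≠ 0 := ne_of_lt hblt
        have h5 : 2 * (-g / b) * g + (-g / b) ^ 2 * b = -(g ^ 2) / b := by
          field_simp
          ring
        rw [h5] at h4
        rw [div_nonpos_iff] at h4
        rcases h4 with ⟨h6, _⟩ | ⟨h6, h7⟩
        · nlinarith
        · linarith
    have : g ^ 2 = 0 := le_antisymm hg2 (sq_nonneg g)
    exact pow_eq_zero_iff (by norm_num) |>.mp this
  have hmv : Mr.mulVec x = 0 := by
    funext j
    have h5 := hker (Pi.single j 1)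
    rw [Matrix.dotProduct_mulVec, dotProduct_single, mul_one] at h5
    rwa [← Matrix.mulVec_transpose, hsymr.eq] at h5
  have hdet : Mr.det = 0 := Matrix.exists_mulVec_eq_zero_iff.mp ⟨x, hx, hmv⟩
  have hdetZ : M.det = 0 := by
    have h9 := RingHom.map_det (Int.castRingHom ℝ) M
    simp only [Int.coe_castRingHom, RingHom.mapMatrix_apply] at h9
    rw [hMr, ← h9] at hdet
    exact_mod_cast hdet
  obtain ⟨w, hw0, hw⟩ := Matrix.exists_mulVec_eq_zero_iff.mpr hdetZ
  have := hneg w hw0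
  rw [hw, dotProduct_zero] at this
  exact lt_irrefl 0 this

lemma laufer_eps {N : ℕ} (hN : N ≠ 0) (M : Matrix (Fin N) (Fin N) ℤ) (hsym : M.IsSymm)
    (hneg : ∀ x : Fin N → ℤ, x ≠ 0 → x ⬝ᵥ M.mulVec x < 0) :
    ∃ ε : ℝ, 0 < ε ∧ ∀ x : Fin N → ℝ,
      x ⬝ᵥ (M.map ((↑) : ℤ → ℝ)).mulVec x ≤ -ε * ‖x‖ ^ 2 := by
  set Mr := M.map ((↑) : ℤ → ℝ) with hMr
  haveI : Nonempty (Fin N) := ⟨⟨0, Nat.pos_of_ne_zero hN⟩⟩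
  have hc : (fun _ : Fin N => (1 : ℝ)) ∈ Metric.sphere (0 : Fin N → ℝ) 1 := by
    simp [mem_sphere_iff_norm, pi_norm_const]
  have hcont : Continuous (fun x : Fin N → ℝ => x ⬝ᵥ Mr.mulVec x) := by
    simp only [dotProduct, mulVec]
    fun_prop
  obtain ⟨x₀, hx₀S, hmax⟩ := (isCompact_sphere (0 : Fin N → ℝ) 1).exists_isMaxOn
    ⟨_, hc⟩ hcont.continuousOn
  have hx₀n : ‖x₀‖ = 1 := by simpa [mem_sphere_iff_norm] using hx₀S
  have hx₀ : x₀ ≠ 0 := by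
    intro h0; rw [h0, norm_zero] at hx₀n; norm_num at hx₀n
  set m := x₀ ⬝ᵥ Mr.mulVec x₀ with hm
  have hmlt : m < 0 := laufer_def M hsym hneg x₀ hx₀
  refine ⟨-m, by linarith, fun x => ?_⟩
  rw [neg_neg]
  by_cases hx : x = 0
  · simp [hx]
  · set u := ‖x‖⁻¹ • x with hudef
    have hnx : (0:ℝ) < ‖x‖ := norm_pos_iff.mpr hx
    have huS : u ∈ Metric.sphere (0 : Fin N → ℝ) 1 := by
      simp [mem_sphere_iff_norm, hudef, norm_smul, abs_of_pos (inv_pos.mpr hnx),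
        inv_mul_cancel₀ hnx.ne']
    have hum : u ⬝ᵥ Mr.mulVec u ≤ m := hmax huS
    have hxu : x = ‖x‖ • u := by
      rw [hudef, smul_smul, mul_inv_cancel₀ hnx.ne', one_smul]
    have hq : x ⬝ᵥ Mr.mulVec x = ‖x‖ ^ 2 * (u ⬝ᵥ Mr.mulVec u) := by
      conv_lhs => rw [hxu]
      rw [mulVec_smul, smul_dotProduct, dotProduct_smul, smul_eq_mul, smul_eq_mul]
      ring
    rw [hq]
    nlinarith [sq_nonneg ‖x‖, hum]

set_option maxHeartbeats 1000000 in
/-- Laufer's algorithm terminates on a negative-definite lattice: there is no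
infinite sequence `z₀, z₁, …` with `z_{i+1} = z_i + E_{v(i)}` and
`⟨z_i, E_{v(i)}⟩ > 0` at every step. -/
theorem laufer_terminates
    (N : ℕ) (M : Matrix (Fin N) (Fin N) ℤ) (hsym : M.IsSymm)
    (hneg : ∀ x : Fin N → ℤ, x ≠ 0 → x ⬝ᵥ M.mulVec x < 0) :
    ¬ ∃ (z : ℕ → Fin N → ℤ) (v : ℕ → Fin N),
        ∀ i : ℕ, 0 < z i ⬝ᵥ M.mulVec (Pi.single (v i) 1) ∧
          z (i + 1) = z i + Pi.single (v i) 1 := by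
  rintro ⟨z, v, hz⟩
  rcases Nat.eq_zero_or_pos N with hN0 | hNpos
  · have := (v 0).isLt; omega
  have hN : N ≠ 0 := Nat.pos_iff_ne_zero.mp hNpos
  obtain ⟨ε, hε, hquad⟩ := laufer_eps hN M hsym hneg
  set Mr := M.map ((↑) : ℤ → ℝ) with hMr
  -- basic objects
  have hsing : ∀ j : Fin N, (Pi.single j 1 : Fin N → ℤ) ≠ 0 := by
    intro j h0
    have := congrFun h0 j
    simp at this
  set a : ℕ → ℤ := fun n => z n ⬝ᵥ M.mulVec (z n) with ha
  set C : ℤ := ∑ j : Fin N,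
    (-(Pi.single j 1 ⬝ᵥ M.mulVec (Pi.single j (1:ℤ)))) with hC
  have hCj : ∀ j : Fin N,
      -(Pi.single j 1 ⬝ᵥ M.mulVec (Pi.single j (1:ℤ))) ≤ C := by
    intro j
    apply Finset.single_le_sum (f := fun j : Fin N =>
      (-(Pi.single j 1 ⬝ᵥ M.mulVec (Pi.single j (1:ℤ)))))
    · intro i _
      have := hneg _ (hsing i)
      linarith
    · exact Finset.mem_univ j
  -- lower bound on a
  have hstep : ∀ n : ℕ, a n + 2 - C ≤ a (n + 1) := by
    intro n
    have h1 := (hz n).1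
    have h2 := (hz n).2
    have h3 : a (n + 1) = a n + 2 * (z n ⬝ᵥ M.mulVec (Pi.single (v n) 1))
        + Pi.single (v n) 1 ⬝ᵥ M.mulVec (Pi.single (v n) (1:ℤ)) := by
      rw [ha]
      simp only
      rw [h2, laufer_expand hsym]
    have h4 := hCj (v n)
    omega
  have hlow : ∀ n : ℕ, a 0 - (n : ℤ) * C ≤ a n := by
    intro n
    induction n with
    | zero => simp
    | succ k ih =>
      have h1 := hstep k
      have hCpos : 0 ≤ C := by
        have := hCj ⟨0, hNpos⟩
        have := hneg _ (hsing ⟨0, hNpos⟩)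
        linarith
      push_cast
      linarith
  -- sums of coordinates
  set s : ℕ → ℤ := fun n => ∑ i, z n i with hs
  have hssucc : ∀ n, s (n + 1) = s n + 1 := by
    intro n
    rw [hs]
    simp only
    rw [(hz n).2]
    simp [Pi.add_apply, Finset.sum_add_distrib, Finset.sum_pi_single']
  have hsn : ∀ n : ℕ, s n = s 0 + n := by
    intro n
    induction n with
    | zero => simp
    | succ k ih => rw [hssucc k, ih]; push_cast; ring
  -- real side
  set xr : ℕ → Fin N → ℝ := fun n i => ((z n i : ℝ)) with hxr
  have hcasta : ∀ n, ((a n : ℤ) : ℝ) = xr n ⬝ᵥ Mr.mulVec (xr n) := by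
    intro n
    rw [ha, hxr, hMr]
    simp only
    exact laufer_cast M (z n) (z n)
  have hsumnorm : ∀ n, |((s n : ℤ) : ℝ)| ≤ (N : ℝ) * ‖xr n‖ := by
    intro n
    have h1 : ((s n : ℤ) : ℝ) = ∑ i, xr n i := by
      rw [hs, hxr]; push_cast; rfl
    rw [h1]
    calc |∑ i, xr n i| ≤ ∑ i, |xr n i| := Finset.abs_sum_le_sum_abs _ _
      _ ≤ ∑ _i : Fin N, ‖xr n‖ := by
          apply Finset.sum_le_sum
          intro i _
          have := norm_le_pi_norm (xr n) i
          simpa [Real.norm_eq_abs] using this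
      _ = (N : ℝ) * ‖xr n‖ := by
          rw [Finset.sum_const]
          simp [mul_comm]
  -- the key inequality for every n
  have hkey : ∀ n : ℕ, ε * ((s 0 : ℝ) + n) ^ 2
      ≤ (N : ℝ) ^ 2 * ((n : ℝ) * (C : ℝ) - ((a 0 : ℤ) : ℝ)) := by
    intro n
    have h1 : ((a 0 : ℤ) : ℝ) - (n : ℝ) * (C : ℝ) ≤ ((a n : ℤ) : ℝ) := by
      have := hlow n
      exact_mod_cast this
    have h2 : ((a n : ℤ) : ℝ) ≤ -ε * ‖xr n‖ ^ 2 := by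
      rw [hcasta n]
      exact hquad (xr n)
    have h3 := hsumnorm n
    have h4 : ((s n : ℤ) : ℝ) = (s 0 : ℝ) + n := by
      rw [hsn n]; push_cast; ring
    have h5 : ((s 0 : ℝ) + n) ^ 2 ≤ ((N : ℝ) * ‖xr n‖) ^ 2 := by
      rw [← h4]
      calc ((s n : ℤ) : ℝ) ^ 2 = |((s n : ℤ) : ℝ)| ^ 2 := (sq_abs _).symm
        _ ≤ ((N : ℝ) * ‖xr n‖) ^ 2 := by
            apply pow_le_pow_left₀ (abs_nonneg _) h3
    nlinarith [norm_nonneg (xr n), sq_nonneg ‖xr n‖]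
  -- contradiction for large n
  clear_value a C s xr
  set S : ℝ := |((s 0 : ℤ) : ℝ)| with hS
  set D : ℝ := (N : ℝ) ^ 2 * (|(C : ℝ)| + |((a 0 : ℤ) : ℝ)|) + 1 with hD
  clear_value S D
  have hDpos : 0 < D := by rw [hD]; positivity
  have hSpos : 0 ≤ S := by rw [hS]; exact abs_nonneg _
  obtain ⟨n, hn⟩ := exists_nat_gt (S + 1 + (D + S * D) / ε)
  have hkn := hkey n
  have hb1 : (s 0 : ℝ) ≥ -S := by rw [hS]; exact neg_abs_le _
  have hb2 : (C : ℝ) ≤ |(C : ℝ)| := le_abs_self _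
  have hb3 : -((a 0 : ℤ) : ℝ) ≤ |((a 0 : ℤ) : ℝ)| := neg_le_abs _
  have hnS : (n : ℝ) - S > 1 + (D + S * D) / ε := by linarith
  have hdiv : 0 ≤ (D + S * D) / ε := by positivity
  have hnS1 : (n : ℝ) - S ≥ 1 := by linarith
  have hn1 : (1 : ℝ) ≤ (n : ℝ) := by linarith
  -- ε (n - S)^2 ≤ ε (s0 + n)^2 ≤ N²(nC - a0) ≤ n D
  have hA : ε * ((n : ℝ) - S) ^ 2 ≤ ε * ((s 0 : ℝ) + n) ^ 2 := by
    have h6 : ((n : ℝ) - S) ≤ (s 0 : ℝ) + n := by linarith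
    have h7 : (0:ℝ) ≤ (n : ℝ) - S := by linarith
    exact mul_le_mul_of_nonneg_left (pow_le_pow_left₀ h7 h6 2) hε.le
  have hB : (N : ℝ) ^ 2 * ((n : ℝ) * (C : ℝ) - ((a 0 : ℤ) : ℝ)) ≤ (n : ℝ) * D := by
    have h8 : (N : ℝ) ^ 2 * ((n : ℝ) * (C : ℝ) - ((a 0 : ℤ) : ℝ))
        ≤ (N : ℝ) ^ 2 * ((n : ℝ) * |(C : ℝ)| + |((a 0 : ℤ) : ℝ)|) := by
      have : (n : ℝ) * (C : ℝ) - ((a 0 : ℤ) : ℝ)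
          ≤ (n : ℝ) * |(C : ℝ)| + |((a 0 : ℤ) : ℝ)| := by
        have := mul_le_mul_of_nonneg_left hb2 (by positivity : (0:ℝ) ≤ (n : ℝ))
        linarith [neg_le_abs ((a 0 : ℤ) : ℝ)]
      nlinarith [sq_nonneg (N : ℝ)]
    have h9 : (N : ℝ) ^ 2 * ((n : ℝ) * |(C : ℝ)| + |((a 0 : ℤ) : ℝ)|) ≤ (n : ℝ) * D := by
      rw [hD]
      have hNn : (0:ℝ) ≤ (N : ℝ) ^ 2 := sq_nonneg _
      have habs : (0:ℝ) ≤ |((a 0 : ℤ) : ℝ)| := abs_nonneg _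
      nlinarith [abs_nonneg ((C : ℝ)), mul_nonneg (mul_nonneg
        (by linarith : (0:ℝ) ≤ (n : ℝ) - 1) hNn) habs, hn1]
    linarith
  have hC1 : ε * ((n : ℝ) - S) ^ 2 ≤ (n : ℝ) * D := le_trans hA (le_trans hkn hB)
  have hC2 : D + S * D < ε * ((n : ℝ) - S) := by
    have h13 : (D + S * D) / ε < (n : ℝ) - S := by linarith
    have h14 := (div_lt_iff₀ hε).mp h13
    exact h14.trans_eq (mul_comm _ _)
  have h10 : (0:ℝ) < (n : ℝ) - S := by linarith
  have h11 : (D + S * D) * ((n : ℝ) - S) < (ε * ((n : ℝ) - S)) * ((n : ℝ) - S) :=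
    mul_lt_mul_of_pos_right hC2 h10
  have h12 : D * (n : ℝ) ≤ (D + S * D) * ((n : ℝ) - S) := by
    nlinarith [mul_nonneg (mul_nonneg hSpos hDpos.le)
      (by linarith : (0:ℝ) ≤ (n : ℝ) - S - 1)]
  nlinarith [hC1]
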